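/- Let I = ((x_1 x_2)^{w_1}, ..., (x_{n-1} x_n)^{w_{n-1}}) be the edge ideal of an edge-weighted path on n vertices with w_{n-1} = 1. Then for all t ≥ 2, ((I^t : x_n) + (x_{n-1})) = (J^t + (x_{n-1})), where J is the edge ideal of the path restricted to vertices {x_1,...,x_{n-2}} (i.e., J = ((x_1x_2)^{w_1},...,(x_{n-3}x_{n-2})^{w_{n-3}})). -/

import Mathlib

open MvPolynomial

private lemma key_poly {A : Type*} [CommRing A] {I : Ideal A} {f : Polynomial A}
    (h : f * Polynomial.X ∈ I.map (Polynomial.C : A →+* Polynomial A)) :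
    f ∈ I.map (Polynomial.C : A →+* Polynomial A) := by
  rw [Ideal.mem_map_C_iff] at h ⊢
  intro n
  have h1 := h (n + 1)
  rwa [mul_comm, Polynomial.coeff_X_mul] at h1

private lemma sup_pow_le {R : Type*} [CommRing R] (A B : Ideal R) (t : ℕ) (ht : 1 ≤ t) :
    (A ⊔ B) ^ t ≤ A ^ t ⊔ B := by
  induction t with
  | zero => omega
  | succ k ih =>
    rcases Nat.eq_zero_or_pos k with hk | hk
    · subst hk; simp
    · calc (A ⊔ B) ^ (k + 1) = (A ⊔ B) ^ k * (A ⊔ B) := pow_succ _ _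
        _ ≤ (A ^ k ⊔ B) * (A ⊔ B) := Ideal.mul_mono_left (ih hk)
        _ = A ^ k * A ⊔ A ^ k * B ⊔ (B * A ⊔ B * B) := by
            rw [Ideal.sup_mul, Ideal.mul_sup, Ideal.mul_sup]
        _ ≤ A ^ (k + 1) ⊔ B := by
            refine sup_le (sup_le ?_ ?_) (sup_le ?_ ?_)
            · rw [← pow_succ]; exact le_sup_left
            · exact le_trans Ideal.mul_le_right le_sup_right
            · exact le_trans Ideal.mul_le_left le_sup_right
            · exact le_trans Ideal.mul_le_right le_sup_right

/-- for the edge ideal of an edge-weighted path on `n = m+2` vertices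
with last edge weight `1`, and `J` the edge ideal of the path on `x_1,…,x_{n-2}`
(edges `e_1,…,e_{n-3}`), we have `(I^t : x_n) + (x_{n-1}) = J^t + (x_{n-1})`
for all `t ≥ 2`. -/
theorem path_colon_vertex_sup (K : Type) [Field K] (m : ℕ) (w : Fin (m + 1) → ℕ)
    (hw : ∀ i, 1 ≤ w i) (hlast : w (Fin.last m) = 1) (t : ℕ) (ht : 2 ≤ t)
    (I J : Ideal (MvPolynomial (Fin (m + 2)) K))
    (hI : I = Ideal.span (Set.range fun i : Fin (m + 1) =>
      (X i.castSucc * X i.succ) ^ w i))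
    (hJ : J = Ideal.span {p : MvPolynomial (Fin (m + 2)) K |
      ∃ i : Fin (m + 1), (i : ℕ) + 2 ≤ m ∧ p = (X i.castSucc * X i.succ) ^ w i}) :
    ((I ^ t).colon ↑(Ideal.span {X (Fin.last (m + 1))} : Ideal (MvPolynomial (Fin (m + 2)) K))) ⊔
        Ideal.span {X ((Fin.last m).castSucc)} =
      (J ^ t) ⊔ Ideal.span {X ((Fin.last m).castSucc)} := by
  set P : Ideal (MvPolynomial (Fin (m + 2)) K) :=
    Ideal.span {X ((Fin.last m).castSucc)} with hP
  -- the algebra iso separating the last variable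
  set ψ : MvPolynomial (Fin (m + 2)) K ≃ₐ[K] Polynomial (MvPolynomial (Fin (m + 1)) K) :=
    (renameEquiv K (finRotate (m + 2))).trans (finSuccEquiv K (m + 1)) with hψdef
  have hψX : ∀ j : Fin (m + 1), ψ (X j.castSucc) = Polynomial.C (X j) := by
    intro j
    simp [hψdef, renameEquiv_apply, finRotate_succ_apply, Fin.coeSucc_eq_succ,
      finSuccEquiv_X_succ]
  have hψy : ψ (X (Fin.last (m + 1))) = Polynomial.X := by
    simp [hψdef, renameEquiv_apply, finRotate_last, finSuccEquiv_X_zero]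
  -- base ideals
  set J₀ : Ideal (MvPolynomial (Fin (m + 1)) K) :=
    Ideal.span {p : MvPolynomial (Fin (m + 1)) K |
      ∃ i : Fin (m + 1), ∃ _ : (i : ℕ) + 2 ≤ m,
        p = (X i * X ⟨(i : ℕ) + 1, by omega⟩) ^ w i} with hJ₀
  set P₀ : Ideal (MvPolynomial (Fin (m + 1)) K) := Ideal.span {X (Fin.last m)} with hP₀
  have hsucc : ∀ i : Fin (m + 1), (hi : (i : ℕ) + 2 ≤ m) →
      i.succ = Fin.castSucc (⟨(i : ℕ) + 1, by omega⟩ : Fin (m + 1)) := by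
    intro i hi
    ext
    simp
  have hmapJ : Ideal.map ψ J = Ideal.map (Polynomial.C :
      MvPolynomial (Fin (m + 1)) K →+* Polynomial (MvPolynomial (Fin (m + 1)) K)) J₀ := by
    rw [hJ, hJ₀, Ideal.map_span, Ideal.map_span]
    congr 1
    ext q
    constructor
    · rintro ⟨p, ⟨i, hi, rfl⟩, rfl⟩
      refine ⟨(X i * X ⟨(i : ℕ) + 1, by omega⟩) ^ w i, ?_, ?_⟩
      · exact ⟨i, hi, rfl⟩
      rw [map_pow, map_mul, map_pow, map_mul, hψX i, hsucc i hi, hψX]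
    · rintro ⟨p, ⟨i, hi, rfl⟩, rfl⟩
      refine ⟨(X i.castSucc * X i.succ) ^ w i, ?_, ?_⟩
      · exact ⟨i, hi, rfl⟩
      rw [map_pow, map_mul, map_pow, map_mul, hψX i, hsucc i hi, hψX]
  have hmapP : Ideal.map ψ P = Ideal.map (Polynomial.C :
      MvPolynomial (Fin (m + 1)) K →+* Polynomial (MvPolynomial (Fin (m + 1)) K)) P₀ := by
    rw [hP, hP₀, Ideal.map_span, Ideal.map_span, Set.image_singleton, Set.image_singleton,
      hψX (Fin.last m)]
  -- the key closure property of Q := J^t ⊔ P under division by the last variable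
  have hQcolon : ∀ f : MvPolynomial (Fin (m + 2)) K,
      f * X (Fin.last (m + 1)) ∈ J ^ t ⊔ P → f ∈ J ^ t ⊔ P := by
    intro f hf
    have hmapQ : Ideal.map ψ (J ^ t ⊔ P) = Ideal.map (Polynomial.C :
        MvPolynomial (Fin (m + 1)) K →+* Polynomial (MvPolynomial (Fin (m + 1)) K))
        (J₀ ^ t ⊔ P₀) := by
      rw [Ideal.map_sup, Ideal.map_sup, Ideal.map_pow, Ideal.map_pow, hmapJ, hmapP]
    have hmem : ψ (f * X (Fin.last (m + 1))) ∈ Ideal.map ψ (J ^ t ⊔ P) :=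
      Ideal.mem_map_of_mem _ hf
    rw [map_mul, hψy, hmapQ] at hmem
    have hmem2 := key_poly hmem
    rw [← hmapQ] at hmem2
    have hco : Ideal.comap ψ (Ideal.map ψ (J ^ t ⊔ P)) = J ^ t ⊔ P :=
      Ideal.comap_map_of_bijective _ ψ.bijective
    rw [← hco]
    exact hmem2
  apply le_antisymm
  · refine sup_le (fun f hf => ?_) le_sup_right
    have hfy : f * X (Fin.last (m + 1)) ∈ I ^ t := Ideal.mem_colon_span_singleton.mp hf
    -- I ≤ J ⊔ P
    have hIJP : I ≤ J ⊔ P := by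
      rw [hI]
      refine Ideal.span_le.mpr ?_
      rintro p ⟨i, rfl⟩
      by_cases hi : (i : ℕ) + 2 ≤ m
      · refine Ideal.mem_sup_left ?_
        rw [hJ]
        exact Ideal.subset_span ⟨i, hi, rfl⟩
      · apply Ideal.mem_sup_right
        rw [hP, Ideal.mem_span_singleton]
        have hi' : (i : ℕ) = m ∨ (i : ℕ) + 1 = m := by
          have := i.isLt; omega
        rcases hi' with h | h
        · have he : X ((Fin.last m).castSucc) =
              (X i.castSucc : MvPolynomial (Fin (m + 2)) K) := by
            congr 1
            ext
            simp [h]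
          rw [he]
          exact dvd_pow (dvd_mul_right _ _) (by have := hw i; omega)
        · have he : X ((Fin.last m).castSucc) =
              (X i.succ : MvPolynomial (Fin (m + 2)) K) := by
            congr 1
            ext
            simp [h]
          rw [he]
          exact dvd_pow (dvd_mul_left _ _) (by have := hw i; omega)
    have hIt : I ^ t ≤ J ^ t ⊔ P := by
      calc I ^ t ≤ (J ⊔ P) ^ t := Ideal.pow_right_mono hIJP t
        _ ≤ J ^ t ⊔ P := sup_pow_le _ _ t (by omega)
    exact hQcolon f (hIt hfy)
  · refine sup_le ?_ le_sup_right
    have hJI : J ≤ I := by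
      rw [hI, hJ]
      refine Ideal.span_le.mpr ?_
      rintro p ⟨i, -, rfl⟩
      exact Ideal.subset_span (Set.mem_range_self i)
    refine le_trans ?_ (le_sup_left : _ ≤ _ ⊔ P)
    intro x hx
    rw [Ideal.mem_colon_span_singleton]
    exact Ideal.mul_mem_right _ _ (Ideal.pow_right_mono hJI t hx)
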